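/- Consider an aggregative game with cost functions J_i(x_i, x_{−i}) = g_i(x_i) + (C·avg(x))ᵀ x_i where C = Cᵀ and avg(x) = (1/N)∑ᵢ x_i, with each g_i convex. Then the game is potential: the function φ(x) = ∑ᵢ g_i(x_i) + (1/(2N)) xᵀ((I_N + 𝟙𝟙ᵀ) ⊗ C) x satisfies ∂φ = P, where P(x) = ∏ᵢ ∂_{x_i} J_i(x_i, x_{−i}) is the pseudo-subdifferential. -/

import Mathlib

open scoped RealInnerProductSpace

private lemma grad_of_fderiv {E : Type*} [NormedAddCommGroup E] [InnerProductSpace ℝ E]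
    [CompleteSpace E] {f : E → ℝ} {f' : E →L[ℝ] ℝ} {x g : E}
    (h : HasFDerivAt f f' x) (hg : ∀ v, f' v = ⟪g, v⟫) : HasGradientAt f g x := by
  rw [hasGradientAt_iff_hasFDerivAt]
  convert h using 1
  · rfl
  exact (ContinuousLinearMap.ext fun v => by rw [hg]; simp).symm

theorem linear_coupling_potential_game {n N : ℕ} (hN : 0 < N)
    (C : EuclideanSpace ℝ (Fin n) →L[ℝ] EuclideanSpace ℝ (Fin n))
    (hCsymm : ∀ u v, ⟪C u, v⟫ = ⟪u, C v⟫)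
    (g : Fin N → EuclideanSpace ℝ (Fin n) → ℝ)
    (hgconv : ∀ i, ConvexOn ℝ Set.univ (g i))
    (G : Fin N → EuclideanSpace ℝ (Fin n) → EuclideanSpace ℝ (Fin n))
    (hg : ∀ i y, HasGradientAt (g i) (G i y) y) :
    ∀ (x : Fin N → EuclideanSpace ℝ (Fin n)) (i : Fin N),
      HasGradientAt
        (fun t => (∑ j, g j (Function.update x i t j)) +
          (1 / (2 * (N : ℝ))) *
            ((∑ j, ⟪C (Function.update x i t j), Function.update x i t j⟫) +
              ⟪C (∑ j, Function.update x i t j), ∑ j, Function.update x i t j⟫))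
        (G i (x i) + C ((N : ℝ)⁻¹ • ∑ j, x j) + (N : ℝ)⁻¹ • C (x i)) (x i)
      ∧
      HasGradientAt
        (fun t => g i t + ⟪C ((N : ℝ)⁻¹ • ∑ j, Function.update x i t j), t⟫)
        (G i (x i) + C ((N : ℝ)⁻¹ • ∑ j, x j) + (N : ℝ)⁻¹ • C (x i)) (x i) := by
  intro x i
  set a : EuclideanSpace ℝ (Fin n) := ∑ j ∈ Finset.univ.erase i, x j with ha
  have hsum : ∑ j, x j = a + x i := by
    rw [ha, add_comm]
    exact (Finset.add_sum_erase _ _ (Finset.mem_univ i)).symm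
  have h1 : ∀ t : EuclideanSpace ℝ (Fin n), (∑ j, g j (Function.update x i t j))
      = g i t + ∑ j ∈ Finset.univ.erase i, g j (x j) := by
    intro t
    rw [← Finset.add_sum_erase _ _ (Finset.mem_univ i), Function.update_self]
    congr 1
    exact Finset.sum_congr rfl fun j hj =>
      by rw [Function.update_of_ne (Finset.ne_of_mem_erase hj)]
  have h2 : ∀ t : EuclideanSpace ℝ (Fin n),
      (∑ j, (⟪C (Function.update x i t j), Function.update x i t j⟫ : ℝ))
      = ⟪C t, t⟫ + ∑ j ∈ Finset.univ.erase i, ⟪C (x j), x j⟫ := by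
    intro t
    rw [← Finset.add_sum_erase _ _ (Finset.mem_univ i), Function.update_self]
    congr 1
    exact Finset.sum_congr rfl fun j hj =>
      by rw [Function.update_of_ne (Finset.ne_of_mem_erase hj)]
  have h3 : ∀ t : EuclideanSpace ℝ (Fin n), (∑ j, Function.update x i t j) = a + t := by
    intro t
    rw [← Finset.add_sum_erase _ _ (Finset.mem_univ i), Function.update_self, add_comm]
    congr 1
    exact Finset.sum_congr rfl fun j hj =>
      by rw [Function.update_of_ne (Finset.ne_of_mem_erase hj)]
  have hNe : (N : ℝ) ≠ 0 := Nat.cast_ne_zero.mpr hN.ne'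
  have hid : HasFDerivAt (fun t : EuclideanSpace ℝ (Fin n) => t)
      (ContinuousLinearMap.id ℝ (EuclideanSpace ℝ (Fin n))) (x i) := hasFDerivAt_id _
  have hshift : HasFDerivAt (fun t : EuclideanSpace ℝ (Fin n) => a + t)
      (ContinuousLinearMap.id ℝ (EuclideanSpace ℝ (Fin n))) (x i) := hid.const_add a
  have hCq : HasFDerivAt (fun t : EuclideanSpace ℝ (Fin n) => (⟪C t, t⟫ : ℝ))
      ((fderivInnerCLM ℝ (C (x i), x i)).comp
        (C.prod (ContinuousLinearMap.id ℝ (EuclideanSpace ℝ (Fin n))))) (x i) :=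
    ((C.hasFDerivAt).inner ℝ hid)
  have hCa : HasFDerivAt (fun t : EuclideanSpace ℝ (Fin n) => C (a + t))
      (C.comp (ContinuousLinearMap.id ℝ (EuclideanSpace ℝ (Fin n)))) (x i) :=
    (C.hasFDerivAt).comp (x i) hshift
  have hCq2 : HasFDerivAt (fun t : EuclideanSpace ℝ (Fin n) => (⟪C (a + t), a + t⟫ : ℝ))
      ((fderivInnerCLM ℝ (C (a + x i), a + x i)).comp
        ((C.comp (ContinuousLinearMap.id ℝ (EuclideanSpace ℝ (Fin n)))).prod
          (ContinuousLinearMap.id ℝ (EuclideanSpace ℝ (Fin n))))) (x i) := hCa.inner ℝ hshift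
  have hsym : ∀ u v : EuclideanSpace ℝ (Fin n), (⟪C u, v⟫ : ℝ) = ⟪C v, u⟫ := fun u v => by
    rw [hCsymm, real_inner_comm]
  constructor
  · have hfun : (fun t : EuclideanSpace ℝ (Fin n) => (∑ j, g j (Function.update x i t j)) +
          (1 / (2 * (N : ℝ))) *
            ((∑ j, ⟪C (Function.update x i t j), Function.update x i t j⟫) +
              ⟪C (∑ j, Function.update x i t j), ∑ j, Function.update x i t j⟫))
        = (fun t : EuclideanSpace ℝ (Fin n) =>
            (g i t + ∑ j ∈ Finset.univ.erase i, g j (x j)) +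
          (1 / (2 * (N : ℝ))) *
            ((⟪C t, t⟫ + ∑ j ∈ Finset.univ.erase i, ⟪C (x j), x j⟫) +
              ⟪C (a + t), a + t⟫)) := by
      funext t; rw [h1, h2, h3]
    rw [hfun]
    refine grad_of_fderiv (((hg i (x i)).hasFDerivAt.add_const _).add
      (((hCq.add_const _).add hCq2).const_mul _)) fun v => ?_
    simp only [ContinuousLinearMap.add_apply, ContinuousLinearMap.coe_smul',
      ContinuousLinearMap.smul_apply, ContinuousLinearMap.comp_apply,
      ContinuousLinearMap.prod_apply, ContinuousLinearMap.coe_id', id_eq,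
      fderivInnerCLM_apply, InnerProductSpace.toDual_apply_apply, hsum, map_smul,
      inner_add_left, inner_add_right, real_inner_smul_left, smul_eq_mul,
      Pi.smul_apply]
    rw [hsym v (x i), hsym v a, map_add C a (x i), inner_add_left]
    field_simp
    ring
  · have hfun : (fun t : EuclideanSpace ℝ (Fin n) =>
        g i t + ⟪C ((N : ℝ)⁻¹ • ∑ j, Function.update x i t j), t⟫)
        = (fun t : EuclideanSpace ℝ (Fin n) => g i t + ⟪C ((N : ℝ)⁻¹ • (a + t)), t⟫) := by
      funext t; rw [h3]
    rw [hfun]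
    have hCs : HasFDerivAt (fun t : EuclideanSpace ℝ (Fin n) => C ((N : ℝ)⁻¹ • (a + t)))
        (C.comp ((N : ℝ)⁻¹ • ContinuousLinearMap.id ℝ (EuclideanSpace ℝ (Fin n)))) (x i) :=
      (C.hasFDerivAt).comp (x i) (hshift.const_smul (N : ℝ)⁻¹)
    refine grad_of_fderiv ((hg i (x i)).hasFDerivAt.add (hCs.inner ℝ hid)) fun v => ?_
    simp only [ContinuousLinearMap.add_apply, ContinuousLinearMap.coe_smul',
      ContinuousLinearMap.smul_apply, ContinuousLinearMap.comp_apply,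
      ContinuousLinearMap.prod_apply, ContinuousLinearMap.coe_id', id_eq,
      fderivInnerCLM_apply, InnerProductSpace.toDual_apply_apply, hsum, map_smul,
      inner_add_left, inner_add_right, real_inner_smul_left, smul_eq_mul,
      Pi.smul_apply]
    rw [hsym v (x i)]
    field_simp
    ring
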